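/- Let μ be a Borel measure on (0,∞) with ∫_{(0,∞)} min(x, x²) μ(dx) < ∞, γ ≥ 0, and ψ₀(θ) = γ²θ² + ∫_{(0,∞)} (e^{−θx} − 1 + θx) μ(dx). Then for every λ > 0, one has ∫_0^λ ψ₀(θ)/θ² dθ < ∞ if and only if ∫_{(1,∞)} x log x μ(dx) < ∞. -/

import Mathlib

open Real MeasureTheory

namespace Stmt16Aux

lemma aux_nonneg (u : ℝ) : 0 ≤ Real.exp (-u) - 1 + u := by
  have := Real.add_one_le_exp (-u); linarith

lemma aux_le_linear {u : ℝ} (hu : 0 ≤ u) : Real.exp (-u) - 1 + u ≤ u := by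
  have h : Real.exp (-u) ≤ 1 := by
    rw [← Real.exp_zero]
    exact Real.exp_le_exp.mpr (by linarith)
  linarith

lemma aux_le_sq {u : ℝ} (hu : 0 ≤ u) : Real.exp (-u) - 1 + u ≤ u ^ 2 / 2 := by
  set f : ℝ → ℝ := fun t => t ^ 2 / 2 - (Real.exp (-t) - 1 + t) with hf
  have key : ∀ v : ℝ, HasDerivAt f (v - (Real.exp (-v) * (-1) + 1)) v := by
    intro v
    have h1 : HasDerivAt (fun t : ℝ => t ^ 2 / 2) v v := by
      simpa using (hasDerivAt_pow 2 v).div_const 2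
    have h2 : HasDerivAt (fun t : ℝ => Real.exp (-t)) (Real.exp (-v) * (-1)) v := by
      have := (Real.hasDerivAt_exp (-v)).comp v ((hasDerivAt_id v).neg)
      simpa [Function.comp_def] using this
    have h3 : HasDerivAt (fun t : ℝ => Real.exp (-t) - 1 + t)
        (Real.exp (-v) * (-1) + 1) v := by
      simpa [Pi.add_def] using (h2.sub_const 1).add (hasDerivAt_id v)
    exact h1.sub h3
  have mono : MonotoneOn f (Set.Ici (0 : ℝ)) := by
    apply monotoneOn_of_deriv_nonneg (convex_Ici 0)
    · exact Continuous.continuousOn (by fun_prop)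
    · intro x hx
      exact (key x).differentiableAt.differentiableWithinAt
    · intro x hx
      rw [(key x).deriv]
      have := Real.add_one_le_exp (-x)
      simp only [interior_Ici, Set.mem_Ioi] at hx
      nlinarith [Real.exp_pos (-x)]
  have h0 : f 0 = 0 := by simp [hf]
  have := mono Set.self_mem_Ici hu hu
  rw [h0] at this
  simp only [hf] at this
  linarith

lemma aux_ge {u : ℝ} (hu : 2 ≤ u) : u / 2 ≤ Real.exp (-u) - 1 + u := by
  have := Real.exp_pos (-u); linarith

/-- Evaluation of the elementary lintegral of `c / θ` over `Ioc a b`. -/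
lemma eval_div_int {a b c : ℝ} (ha : 0 < a) (hab : a ≤ b) (hc : 0 ≤ c) :
    ∫⁻ θ in Set.Ioc a b, ENNReal.ofReal (c / θ) =
      ENNReal.ofReal (c * Real.log (b / a)) := by
  have hb : 0 < b := lt_of_lt_of_le ha hab
  have hInt : IntegrableOn (fun θ => c / θ) (Set.Ioc a b) := by
    have hcont : ContinuousOn (fun θ : ℝ => c / θ) (Set.Icc a b) := by
      apply ContinuousOn.div continuousOn_const continuousOn_id
      intro θ hθ
      exact ne_of_gt (lt_of_lt_of_le ha hθ.1)
    exact hcont.integrableOn_Icc.mono_set Set.Ioc_subset_Icc_self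
  rw [← ofReal_integral_eq_lintegral_ofReal hInt ?_]
  · congr 1
    rw [← intervalIntegral.integral_of_le hab]
    simp_rw [div_eq_mul_inv]
    rw [intervalIntegral.integral_const_mul,
      integral_inv (Set.notMem_uIcc_of_lt ha hb), ← div_eq_mul_inv]
  · filter_upwards [self_mem_ae_restrict measurableSet_Ioc] with θ hθ
    exact div_nonneg hc (le_of_lt (lt_trans ha hθ.1))

lemma eval_const_int {a b c : ℝ} (hc : 0 ≤ c) :
    ∫⁻ θ in Set.Ioc a b, ENNReal.ofReal c =
      ENNReal.ofReal (c * (b - a)) := by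
  rw [setLIntegral_const, Real.volume_Ioc, ← ENNReal.ofReal_mul hc]

end Stmt16Aux

open Stmt16Aux

set_option maxHeartbeats 2000000 in
theorem stmt_16 (μ : Measure ℝ) (γ : ℝ) (hγ : 0 ≤ γ)
    (hμ : IntegrableOn (fun x => min x (x ^ 2)) (Set.Ioi 0) μ)
    (ψ₀ : ℝ → ℝ)
    (hψ : ∀ θ, ψ₀ θ = γ ^ 2 * θ ^ 2 +
      ∫ x in Set.Ioi (0:ℝ), (Real.exp (-θ * x) - 1 + θ * x) ∂μ) :
    ∀ lam > (0:ℝ),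
      ((∫⁻ θ in Set.Ioc (0:ℝ) lam, ENNReal.ofReal (ψ₀ θ / θ ^ 2)) < ⊤ ↔
        (∫⁻ x in Set.Ioi (1:ℝ), ENNReal.ofReal (x * Real.log x) ∂μ) < ⊤) := by
  intro lam hlam
  set g : ℝ → ℝ → ℝ := fun θ x => Real.exp (-θ * x) - 1 + θ * x with hg
  have g_eq : ∀ θ x : ℝ, g θ x = Real.exp (-(θ * x)) - 1 + θ * x := by
    intro θ x; simp only [hg, neg_mul]
  have g_nonneg : ∀ θ x : ℝ, 0 ≤ g θ x := by
    intro θ x; rw [g_eq]; exact aux_nonneg _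
  have g_le_sq : ∀ θ x : ℝ, 0 ≤ θ * x → g θ x ≤ (θ * x) ^ 2 / 2 := by
    intro θ x h; rw [g_eq]; exact aux_le_sq h
  have g_le_lin : ∀ θ x : ℝ, 0 ≤ θ * x → g θ x ≤ θ * x := by
    intro θ x h; rw [g_eq]; exact aux_le_linear h
  have g_ge : ∀ θ x : ℝ, 2 ≤ θ * x → θ * x / 2 ≤ g θ x := by
    intro θ x h; rw [g_eq]; exact aux_ge h
  -- σ-finiteness of μ restricted to Ioi 0
  haveI sf : SigmaFinite (μ.restrict (Set.Ioi 0)) := by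
    refine ⟨⟨⟨fun n => {x : ℝ | (1:ℝ)/(n+1) ≤ min x (x^2)} ∪ Set.Iic 0,
      fun _ => trivial, ?_, ?_⟩⟩⟩
    · intro n
      have h1 : μ.restrict (Set.Ioi 0) {x : ℝ | (1:ℝ)/(n+1) ≤ min x (x^2)} < ⊤ := by
        have hfin := hμ.measure_norm_ge_lt_top (ε := (1/(n+1:ℝ))) (by positivity)
        refine lt_of_le_of_lt (measure_mono ?_) hfin
        intro x hx
        simp only [Set.mem_setOf_eq] at hx ⊢
        rw [Real.norm_eq_abs]
        exact le_trans hx (le_abs_self _)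
      have h2 : μ.restrict (Set.Ioi 0) (Set.Iic 0) = 0 := by
        rw [Measure.restrict_apply' measurableSet_Ioi]
        have hIe : Set.Iic (0:ℝ) ∩ Set.Ioi 0 = ∅ := by
          ext y
          simp only [Set.mem_inter_iff, Set.mem_Iic, Set.mem_Ioi,
            Set.mem_empty_iff_false, iff_false, not_and, not_lt]
          exact fun h => h
        rw [hIe, measure_empty]
      refine lt_of_le_of_lt (measure_union_le _ _) ?_
      rw [h2, add_zero]
      exact h1
    · ext x
      simp only [Set.mem_iUnion, Set.mem_union, Set.mem_setOf_eq, Set.mem_Iic,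
        Set.mem_univ, iff_true]
      rcases le_or_gt x 0 with hx | hx
      · exact ⟨0, Or.inr hx⟩
      · have hm : 0 < min x (x^2) := lt_min hx (by positivity)
        obtain ⟨n, hn⟩ := exists_nat_one_div_lt hm
        exact ⟨n, Or.inl hn.le⟩
  -- finiteness of the reference integrals
  have hmin_fin : ∫⁻ x in Set.Ioi 0, ENNReal.ofReal (min x (x^2)) ∂μ < ⊤ := by
    refine lt_of_le_of_lt (lintegral_mono fun x => ?_) hμ.2
    exact Real.ofReal_le_enorm _
  have hx_fin : ∫⁻ x in Set.Ioi 1, ENNReal.ofReal x ∂μ < ⊤ := by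
    refine lt_of_le_of_lt ?_ hmin_fin
    refine le_trans ?_ (lintegral_mono_set (Set.Ioi_subset_Ioi zero_le_one))
    refine lintegral_mono_ae ?_
    filter_upwards [self_mem_ae_restrict measurableSet_Ioi] with x hx
    have h1 : (1:ℝ) < x := hx
    have hmin : min x (x^2) = x := min_eq_left (by nlinarith)
    rw [hmin]
  have hsq_fin : ∫⁻ x in Set.Ioc 0 1, ENNReal.ofReal (x^2) ∂μ < ⊤ := by
    refine lt_of_le_of_lt ?_ hmin_fin
    refine le_trans ?_ (lintegral_mono_set (s := Set.Ioc (0:ℝ) 1)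
      Set.Ioc_subset_Ioi_self)
    refine lintegral_mono_ae ?_
    filter_upwards [self_mem_ae_restrict measurableSet_Ioc] with x hx
    have h0 : (0:ℝ) < x := hx.1
    have h1 : x ≤ 1 := hx.2
    have hmin : min x (x^2) = x^2 := min_eq_right (by nlinarith)
    rw [hmin]
  -- pointwise identity for θ ∈ Ioc 0 lam
  have key1 : ∀ θ ∈ Set.Ioc (0:ℝ) lam,
      ENNReal.ofReal (ψ₀ θ / θ^2) = ENNReal.ofReal (γ^2) +
        ∫⁻ x in Set.Ioi 0, ENNReal.ofReal (g θ x / θ^2) ∂μ := by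
    intro θ hθ
    have hθ0 : 0 < θ := hθ.1
    have hint : Integrable (g θ) (μ.restrict (Set.Ioi 0)) := by
      refine Integrable.mono' (hμ.const_mul (max θ (θ^2/2))) ?_ ?_
      · exact Continuous.aestronglyMeasurable (by fun_prop)
      · filter_upwards [self_mem_ae_restrict measurableSet_Ioi] with x hx
        have hx0 : (0:ℝ) < x := hx
        rw [Real.norm_eq_abs, abs_of_nonneg (g_nonneg θ x)]
        rcases le_total x 1 with h1 | h1
        · have hmin : min x (x^2) = x^2 := min_eq_right (by nlinarith)
          rw [hmin]
          calc g θ x ≤ (θ * x)^2 / 2 := g_le_sq θ x (by positivity)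
            _ = θ^2/2 * x^2 := by ring
            _ ≤ max θ (θ^2/2) * x^2 :=
                mul_le_mul_of_nonneg_right (le_max_right _ _) (by positivity)
        · have hmin : min x (x^2) = x := min_eq_left (by nlinarith)
          rw [hmin]
          calc g θ x ≤ θ * x := g_le_lin θ x (by positivity)
            _ ≤ max θ (θ^2/2) * x :=
                mul_le_mul_of_nonneg_right (le_max_left _ _) (by linarith)
    have hint2 : Integrable (fun x => g θ x / θ^2) (μ.restrict (Set.Ioi 0)) :=
      hint.div_const _
    have hnn2 : 0 ≤ᵐ[μ.restrict (Set.Ioi 0)] fun x => g θ x / θ^2 :=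
      Filter.Eventually.of_forall fun x => div_nonneg (g_nonneg θ x) (by positivity)
    have hI2_nonneg : 0 ≤ ∫ x in Set.Ioi 0, g θ x / θ^2 ∂μ :=
      integral_nonneg_of_ae hnn2
    have hsplit : (γ ^ 2 * θ ^ 2 + ∫ x in Set.Ioi (0:ℝ), g θ x ∂μ) / θ ^ 2 =
        γ ^ 2 + ∫ x in Set.Ioi (0:ℝ), g θ x / θ^2 ∂μ := by
      rw [integral_div]
      have hθne : θ^2 ≠ 0 := by positivity
      field_simp
    rw [hψ θ, hsplit, ENNReal.ofReal_add (by positivity) hI2_nonneg,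
      ofReal_integral_eq_lintegral_ofReal hint2 hnn2]
  -- define F
  set F : ℝ → ENNReal :=
    fun x => ∫⁻ θ in Set.Ioc (0:ℝ) lam, ENNReal.ofReal (g θ x / θ^2) with hF
  -- Tonelli
  have meas2 : Measurable (Function.uncurry fun θ x =>
      ENNReal.ofReal (g θ x / θ^2)) := by
    apply ENNReal.measurable_ofReal.comp
    apply Measurable.div
    · simp only [hg]; fun_prop
    · fun_prop
  have swap : ∫⁻ θ in Set.Ioc (0:ℝ) lam,
        ∫⁻ x in Set.Ioi 0, ENNReal.ofReal (g θ x / θ^2) ∂μ =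
      ∫⁻ x in Set.Ioi 0, F x ∂μ :=
    lintegral_lintegral_swap meas2.aemeasurable
  have E1 : (∫⁻ θ in Set.Ioc (0:ℝ) lam, ENNReal.ofReal (ψ₀ θ / θ ^ 2)) =
      ENNReal.ofReal (γ^2) * ENNReal.ofReal lam + ∫⁻ x in Set.Ioi 0, F x ∂μ := by
    rw [setLIntegral_congr_fun measurableSet_Ioc
      key1]
    rw [lintegral_add_left measurable_const, swap]
    congr 1
    rw [setLIntegral_const, Real.volume_Ioc]
    norm_num
  -- first reduction
  have red1 : (∫⁻ θ in Set.Ioc (0:ℝ) lam, ENNReal.ofReal (ψ₀ θ / θ ^ 2)) < ⊤ ↔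
      (∫⁻ x in Set.Ioi 0, F x ∂μ) < ⊤ := by
    rw [E1]
    constructor
    · intro h
      exact lt_of_le_of_lt le_add_self h
    · intro h
      exact ENNReal.add_lt_top.mpr ⟨ENNReal.mul_lt_top ENNReal.ofReal_lt_top
        ENNReal.ofReal_lt_top, h⟩
  -- split the μ-integral of F at 1
  have hsplitF : ∫⁻ x in Set.Ioi 0, F x ∂μ =
      (∫⁻ x in Set.Ioc 0 1, F x ∂μ) + ∫⁻ x in Set.Ioi 1, F x ∂μ := by
    rw [← Set.Ioc_union_Ioi_eq_Ioi zero_le_one,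
      lintegral_union measurableSet_Ioi Set.Ioc_disjoint_Ioi_same]
  -- F is at most lam * x^2 / 2
  have Fsq : ∀ x : ℝ, 0 < x → F x ≤ ENNReal.ofReal (x^2/2 * lam) := by
    intro x hx
    have h1 : F x ≤ ∫⁻ _ in Set.Ioc (0:ℝ) lam, ENNReal.ofReal (x^2/2) := by
      refine lintegral_mono_ae ?_
      filter_upwards [self_mem_ae_restrict measurableSet_Ioc] with θ hθ
      apply ENNReal.ofReal_le_ofReal
      rw [div_le_iff₀ (by have := hθ.1; positivity)]
      calc g θ x ≤ (θ * x)^2/2 := g_le_sq θ x (by nlinarith [hθ.1.le])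
        _ = x^2/2 * θ^2 := by ring
    refine le_trans h1 ?_
    rw [eval_const_int (by positivity)]
    apply ENNReal.ofReal_le_ofReal
    nlinarith [sq_nonneg x]
  have small_fin : (∫⁻ x in Set.Ioc 0 1, F x ∂μ) < ⊤ := by
    have hle : (∫⁻ x in Set.Ioc 0 1, F x ∂μ) ≤
        ∫⁻ x in Set.Ioc (0:ℝ) 1, ENNReal.ofReal (lam/2) * ENNReal.ofReal (x^2) ∂μ := by
      refine lintegral_mono_ae ?_
      filter_upwards [self_mem_ae_restrict measurableSet_Ioc] with x hx
      refine le_trans (Fsq x hx.1) ?_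
      rw [← ENNReal.ofReal_mul (by positivity)]
      exact ENNReal.ofReal_le_ofReal (le_of_eq (by ring))
    refine lt_of_le_of_lt hle ?_
    rw [lintegral_const_mul' _ _ ENNReal.ofReal_ne_top]
    exact ENNReal.mul_lt_top ENNReal.ofReal_lt_top hsq_fin
  -- upper bound for F on Ioi 1
  set C₂ : ℝ := 1/2 + |Real.log lam| with hC₂
  have UB : ∀ x : ℝ, 1 < x →
      F x ≤ ENNReal.ofReal (x * Real.log x) + ENNReal.ofReal (C₂ * x) := by
    intro x hx1
    have hx0 : (0:ℝ) < x := lt_trans one_pos hx1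
    set m : ℝ := min lam (1/x) with hm
    have hm0 : 0 < m := lt_min hlam (by positivity)
    have hmlam : m ≤ lam := min_le_left _ _
    have hsplit : F x = (∫⁻ θ in Set.Ioc (0:ℝ) m, ENNReal.ofReal (g θ x / θ^2)) +
        ∫⁻ θ in Set.Ioc m lam, ENNReal.ofReal (g θ x / θ^2) := by
      simp only [hF]
      rw [← Set.Ioc_union_Ioc_eq_Ioc hm0.le hmlam,
        lintegral_union measurableSet_Ioc (Set.Ioc_disjoint_Ioc_of_le le_rfl)]
    have piece1 : (∫⁻ θ in Set.Ioc (0:ℝ) m, ENNReal.ofReal (g θ x / θ^2)) ≤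
        ENNReal.ofReal (x/2) := by
      have h1 : (∫⁻ θ in Set.Ioc (0:ℝ) m, ENNReal.ofReal (g θ x / θ^2)) ≤
          ∫⁻ _ in Set.Ioc (0:ℝ) m, ENNReal.ofReal (x^2/2) := by
        refine lintegral_mono_ae ?_
        filter_upwards [self_mem_ae_restrict measurableSet_Ioc] with θ hθ
        apply ENNReal.ofReal_le_ofReal
        rw [div_le_iff₀ (by have := hθ.1; positivity)]
        calc g θ x ≤ (θ * x)^2/2 := g_le_sq θ x (by nlinarith [hθ.1.le])
          _ = x^2/2 * θ^2 := by ring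
      refine le_trans h1 ?_
      rw [eval_const_int (by positivity)]
      apply ENNReal.ofReal_le_ofReal
      have hmx : m ≤ 1/x := min_le_right _ _
      calc x^2/2 * (m - 0) ≤ x^2/2 * (1/x) :=
            mul_le_mul_of_nonneg_left (by linarith) (by positivity)
        _ = x/2 := by field_simp
    have piece2 : (∫⁻ θ in Set.Ioc m lam, ENNReal.ofReal (g θ x / θ^2)) ≤
        ENNReal.ofReal (x * Real.log (lam / m)) := by
      have h1 : (∫⁻ θ in Set.Ioc m lam, ENNReal.ofReal (g θ x / θ^2)) ≤
          ∫⁻ θ in Set.Ioc m lam, ENNReal.ofReal (x / θ) := by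
        refine lintegral_mono_ae ?_
        filter_upwards [self_mem_ae_restrict measurableSet_Ioc] with θ hθ
        apply ENNReal.ofReal_le_ofReal
        have hθ0 : 0 < θ := lt_of_lt_of_le hm0 hθ.1.le
        rw [div_le_div_iff₀ (by positivity) hθ0]
        have := g_le_lin θ x (by positivity)
        nlinarith
      refine le_trans h1 ?_
      rw [eval_div_int hm0 hmlam hx0.le]
    have hlog : x * Real.log (lam / m) ≤ x * Real.log x + |Real.log lam| * x := by
      have hlx : 0 ≤ Real.log x := Real.log_nonneg hx1.le
      rcases le_total lam (1/x) with h | h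
      · have hml : m = lam := min_eq_left h
        rw [hml, div_self (ne_of_gt hlam), Real.log_one]
        nlinarith [abs_nonneg (Real.log lam)]
      · have hml : m = 1/x := min_eq_right h
        rw [hml]
        have hq : lam / (1/x) = lam * x := by field_simp
        rw [hq, Real.log_mul (ne_of_gt hlam) (ne_of_gt hx0)]
        have h1 : Real.log lam ≤ |Real.log lam| := le_abs_self _
        nlinarith
    calc F x ≤ ENNReal.ofReal (x/2) + ENNReal.ofReal (x * Real.log (lam / m)) := by
          rw [hsplit]; exact add_le_add piece1 piece2
      _ = ENNReal.ofReal (x/2 + x * Real.log (lam / m)) := by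
          have hq : (1:ℝ) ≤ lam / m := (one_le_div hm0).mpr hmlam
          have hlq := Real.log_nonneg hq
          rw [ENNReal.ofReal_add (by positivity) (mul_nonneg hx0.le hlq)]
      _ ≤ ENNReal.ofReal (x * Real.log x + C₂ * x) := by
          apply ENNReal.ofReal_le_ofReal
          rw [hC₂]; nlinarith [hlog]
      _ ≤ _ := ENNReal.ofReal_add_le
  -- lower bound for F
  set x₀ : ℝ := max 1 (4/lam) with hx₀
  set K : ℝ := max 0 (Real.log (2/lam)) with hK
  have LB : ∀ x : ℝ, x₀ < x →
      ENNReal.ofReal (x * Real.log x) ≤ 2 * F x + ENNReal.ofReal (K * x) := by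
    intro x hx
    have hx1 : (1:ℝ) < x := lt_of_le_of_lt (le_max_left _ _) hx
    have hx0 : (0:ℝ) < x := lt_trans one_pos hx1
    have hx4 : 4/lam < x := lt_of_le_of_lt (le_max_right _ _) hx
    have hlx : 4 < lam * x := by
      rw [div_lt_iff₀ hlam] at hx4; linarith
    have h2x : 2/x < lam := by
      rw [div_lt_iff₀ hx0]; nlinarith
    have h2x0 : (0:ℝ) < 2/x := by positivity
    have hFlb : ENNReal.ofReal (x/2 * Real.log (lam / (2/x))) ≤ F x := by
      have h1 : (∫⁻ θ in Set.Ioc (2/x) lam, ENNReal.ofReal (x/2 / θ)) ≤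
          ∫⁻ θ in Set.Ioc (2/x) lam, ENNReal.ofReal (g θ x / θ^2) := by
        refine lintegral_mono_ae ?_
        filter_upwards [self_mem_ae_restrict measurableSet_Ioc] with θ hθ
        apply ENNReal.ofReal_le_ofReal
        have hθ0 : 0 < θ := lt_trans h2x0 hθ.1
        have hu : 2 ≤ θ * x := by
          have h := hθ.1
          rw [div_lt_iff₀ hx0] at h
          nlinarith
        have := g_ge θ x hu
        rw [div_le_div_iff₀ hθ0 (by positivity)]
        nlinarith
      have h2 : (∫⁻ θ in Set.Ioc (2/x) lam, ENNReal.ofReal (g θ x / θ^2)) ≤ F x := by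
        simp only [hF]
        exact lintegral_mono_set (Set.Ioc_subset_Ioc_left h2x0.le)
      refine le_trans ?_ (le_trans h1 h2)
      rw [eval_div_int h2x0 h2x.le (by positivity)]
    have harith : x * Real.log x ≤ 2 * (x/2 * Real.log (lam / (2/x))) + K * x := by
      have hrw : lam / (2/x) = lam * x / 2 := by field_simp
      rw [hrw, Real.log_div (by positivity) two_ne_zero,
        Real.log_mul (ne_of_gt hlam) (ne_of_gt hx0)]
      have hKge : Real.log 2 - Real.log lam ≤ K := by
        rw [hK]
        have hld : Real.log (2/lam) = Real.log 2 - Real.log lam :=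
          Real.log_div two_ne_zero (ne_of_gt hlam)
        rw [← hld]; exact le_max_right _ _
      nlinarith
    calc ENNReal.ofReal (x * Real.log x) ≤
        ENNReal.ofReal (2 * (x/2 * Real.log (lam / (2/x)))) +
          ENNReal.ofReal (K * x) :=
          le_trans (ENNReal.ofReal_le_ofReal harith) ENNReal.ofReal_add_le
      _ ≤ 2 * F x + ENNReal.ofReal (K * x) := by
          gcongr
          rw [ENNReal.ofReal_mul (by norm_num : (0:ℝ) ≤ 2)]
          simp only [ENNReal.ofReal_ofNat]
          gcongr
  -- final equivalence of tails
  have tail_iff : (∫⁻ x in Set.Ioi 1, F x ∂μ) < ⊤ ↔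
      (∫⁻ x in Set.Ioi (1:ℝ), ENNReal.ofReal (x * Real.log x) ∂μ) < ⊤ := by
    constructor
    · intro h
      have h1x₀ : (1:ℝ) ≤ x₀ := le_max_left _ _
      have hsplit : ∫⁻ x in Set.Ioi (1:ℝ), ENNReal.ofReal (x * Real.log x) ∂μ =
          (∫⁻ x in Set.Ioc 1 x₀, ENNReal.ofReal (x * Real.log x) ∂μ) +
            ∫⁻ x in Set.Ioi x₀, ENNReal.ofReal (x * Real.log x) ∂μ := by
        rw [← Set.Ioc_union_Ioi_eq_Ioi h1x₀,
          lintegral_union measurableSet_Ioi Set.Ioc_disjoint_Ioi_same]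
      rw [hsplit]
      refine ENNReal.add_lt_top.mpr ⟨?_, ?_⟩
      · have hle : (∫⁻ x in Set.Ioc 1 x₀, ENNReal.ofReal (x * Real.log x) ∂μ) ≤
            ∫⁻ x in Set.Ioc (1:ℝ) x₀, ENNReal.ofReal (Real.log x₀) * ENNReal.ofReal x ∂μ := by
          refine lintegral_mono_ae ?_
          filter_upwards [self_mem_ae_restrict measurableSet_Ioc] with x hx
          rw [← ENNReal.ofReal_mul (Real.log_nonneg (le_trans hx.1.le hx.2))]
          apply ENNReal.ofReal_le_ofReal
          have hlog : Real.log x ≤ Real.log x₀ :=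
            Real.log_le_log (lt_trans one_pos hx.1) hx.2
          have hxnn : (0:ℝ) ≤ x := le_of_lt (lt_trans one_pos hx.1)
          nlinarith
        refine lt_of_le_of_lt hle ?_
        rw [lintegral_const_mul' _ _ ENNReal.ofReal_ne_top]
        refine ENNReal.mul_lt_top ENNReal.ofReal_lt_top ?_
        exact lt_of_le_of_lt (lintegral_mono_set Set.Ioc_subset_Ioi_self) hx_fin
      · have hle : (∫⁻ x in Set.Ioi x₀, ENNReal.ofReal (x * Real.log x) ∂μ) ≤
            ∫⁻ x in Set.Ioi x₀,
              (2 * F x + ENNReal.ofReal K * ENNReal.ofReal x) ∂μ := by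
          refine lintegral_mono_ae ?_
          filter_upwards [self_mem_ae_restrict measurableSet_Ioi] with x hx
          refine le_trans (LB x hx) ?_
          gcongr
          rw [← ENNReal.ofReal_mul (le_max_left _ _)]
        refine lt_of_le_of_lt hle ?_
        rw [lintegral_add_right _ (by fun_prop)]
        refine ENNReal.add_lt_top.mpr ⟨?_, ?_⟩
        · rw [lintegral_const_mul' _ _ (by norm_num)]
          refine ENNReal.mul_lt_top (by norm_num) ?_
          exact lt_of_le_of_lt (lintegral_mono_set (Set.Ioi_subset_Ioi h1x₀)) h
        · rw [lintegral_const_mul' _ _ ENNReal.ofReal_ne_top]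
          refine ENNReal.mul_lt_top ENNReal.ofReal_lt_top ?_
          exact lt_of_le_of_lt (lintegral_mono_set (Set.Ioi_subset_Ioi h1x₀)) hx_fin
    · intro h
      have hle : (∫⁻ x in Set.Ioi 1, F x ∂μ) ≤
          ∫⁻ x in Set.Ioi (1:ℝ),
            (ENNReal.ofReal (x * Real.log x) +
              ENNReal.ofReal C₂ * ENNReal.ofReal x) ∂μ := by
        refine lintegral_mono_ae ?_
        filter_upwards [self_mem_ae_restrict measurableSet_Ioi] with x hx
        refine le_trans (UB x hx) ?_
        gcongr
        rw [← ENNReal.ofReal_mul (by rw [hC₂]; positivity)]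
      refine lt_of_le_of_lt hle ?_
      rw [lintegral_add_right _ (by fun_prop)]
      refine ENNReal.add_lt_top.mpr ⟨h, ?_⟩
      rw [lintegral_const_mul' _ _ ENNReal.ofReal_ne_top]
      exact ENNReal.mul_lt_top ENNReal.ofReal_lt_top hx_fin
  rw [red1, hsplitF]
  constructor
  · intro h
    exact tail_iff.mp (lt_of_le_of_lt le_add_self h)
  · intro h
    exact ENNReal.add_lt_top.mpr ⟨small_fin, tail_iff.mpr h⟩
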